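/- Let E be a finite-dimensional real inner product space, p ≥ 1 an integer, F : E → ℝ a p-times continuously differentiable function, and h : E → ℝ a function bounded below by an affine function, i.e., there exist a ∈ E and b ∈ ℝ with h(y) ≥ ⟨a, y⟩ + b for all y ∈ E. Fix x ∈ E and let T_p^F(y; x) = Σ_{i=0}^p (1/i!)·D^i F(x)[y - x]^i denote the p-th order Taylor polynomial of F at x. Let (M_i) be a sequence of positive reals with M_i → ∞ and let (y_i) be a sequence in E satisfying, for every i, T_p^F(y_i; x) + (M_i/(p+1)!)·‖y_i - x‖^(p+1) + h(y_i) ≤ F(x) + h(x). Then ‖y_i - x‖ → 0 as i → ∞. -/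

import Mathlib

open scoped BigOperators

/-- The p-th order Taylor polynomial `T_p^F(y; x) = Σ_{i=0}^p (1/i!)·D^i F(x)[y - x]^i`. -/
noncomputable def taylorPoly {E : Type*} [NormedAddCommGroup E] [InnerProductSpace ℝ E]
    (p : ℕ) (F : E → ℝ) (x y : E) : ℝ :=
  ∑ i ∈ Finset.range (p + 1),
    (1 / (Nat.factorial i : ℝ)) * iteratedFDeriv ℝ i F x (fun _ => y - x)

private lemma pow_le_one_add_pow {r : ℝ} (hr : 0 ≤ r) {i p : ℕ} (hip : i ≤ p) :
    r ^ i ≤ 1 + r ^ p := by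
  rcases le_or_gt r 1 with h1 | h1
  · have : r ^ i ≤ 1 := pow_le_one₀ hr h1
    have : (0:ℝ) ≤ r ^ p := pow_nonneg hr p
    linarith [pow_le_one₀ hr h1 (n := i)]
  · have : r ^ i ≤ r ^ p := pow_le_pow_right₀ h1.le hip
    have : (0:ℝ) ≤ r ^ p := pow_nonneg hr p
    linarith [pow_le_pow_right₀ h1.le hip]

/-- Well-definedness of the NHOTA inner loop: as the regularization parameters `M i` tend
to infinity, points satisfying the model-decrease condition must converge to `x`. -/
theorem nhota_inner_loop_displacement_vanishes
    {E : Type*} [NormedAddCommGroup E] [InnerProductSpace ℝ E] [FiniteDimensional ℝ E]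
    (p : ℕ) (hp : 1 ≤ p)
    (F : E → ℝ) (hF : ContDiff ℝ (p : ℕ∞) F)
    (h : E → ℝ) (a : E) (b : ℝ) (haff : ∀ y : E, (inner ℝ a y : ℝ) + b ≤ h y)
    (x : E) (M : ℕ → ℝ) (hMpos : ∀ i : ℕ, 0 < M i)
    (hMtop : Filter.Tendsto M Filter.atTop Filter.atTop)
    (y : ℕ → E)
    (hy : ∀ i : ℕ,
      taylorPoly p F x (y i) + (M i / (Nat.factorial (p + 1) : ℝ)) * ‖y i - x‖ ^ (p + 1)
        + h (y i) ≤ F x + h x) :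
    Filter.Tendsto (fun i : ℕ => ‖y i - x‖) Filter.atTop (nhds 0) := by
  set r : ℕ → ℝ := fun i => ‖y i - x‖ with hr
  have hrnn : ∀ i, 0 ≤ r i := fun i => norm_nonneg _
  set C1 : ℝ := ∑ j ∈ Finset.range (p + 1),
      (1 / (Nat.factorial j : ℝ)) * ‖iteratedFDeriv ℝ j F x‖ with hC1
  have hC1nn : 0 ≤ C1 := Finset.sum_nonneg fun j _ => by positivity
  -- bound on the Taylor polynomial
  have hT : ∀ i, |taylorPoly p F x (y i)| ≤ C1 * (1 + r i ^ p) := by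
    intro i
    have : |taylorPoly p F x (y i)| ≤ ∑ j ∈ Finset.range (p + 1),
        ((1 / (Nat.factorial j : ℝ)) * ‖iteratedFDeriv ℝ j F x‖) * (1 + r i ^ p) := by
      refine (Finset.abs_sum_le_sum_abs _ _).trans ?_
      refine Finset.sum_le_sum fun j hj => ?_
      have hjp : j ≤ p := Nat.lt_succ_iff.mp (Finset.mem_range.mp hj)
      have hb : |iteratedFDeriv ℝ j F x (fun _ => y i - x)| ≤
          ‖iteratedFDeriv ℝ j F x‖ * r i ^ j := by
        have := (iteratedFDeriv ℝ j F x).le_opNorm (fun _ => y i - x)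
        simpa [Real.norm_eq_abs, Finset.prod_const] using this
      have hpow : r i ^ j ≤ 1 + r i ^ p := pow_le_one_add_pow (hrnn i) hjp
      have hfac : (0:ℝ) < (Nat.factorial j : ℝ) := by positivity
      calc |(1 / (Nat.factorial j : ℝ)) * iteratedFDeriv ℝ j F x (fun _ => y i - x)|
          = (1 / (Nat.factorial j : ℝ)) * |iteratedFDeriv ℝ j F x (fun _ => y i - x)| := by
            rw [abs_mul, abs_of_pos (by positivity)]
        _ ≤ (1 / (Nat.factorial j : ℝ)) * (‖iteratedFDeriv ℝ j F x‖ * r i ^ j) := by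
            apply mul_le_mul_of_nonneg_left hb (by positivity)
        _ ≤ ((1 / (Nat.factorial j : ℝ)) * ‖iteratedFDeriv ℝ j F x‖) * (1 + r i ^ p) := by
            rw [mul_assoc]
            exact mul_le_mul_of_nonneg_left
              (mul_le_mul_of_nonneg_left hpow (norm_nonneg _)) (by positivity)
    simpa [hC1, ← Finset.sum_mul] using this
  -- the key inequality
  set C : ℝ := C1 + ‖a‖ * ‖x‖ + ‖a‖ + |F x + h x - b| with hC
  have hCnn : 0 ≤ C := by positivity
  set K : ℝ := (Nat.factorial (p + 1) : ℝ) * C + 1 with hK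
  have hKpos : 0 < K := by positivity
  have key : ∀ i, M i * r i ^ (p + 1) ≤ K * (1 + r i ^ p) := by
    intro i
    have hfac : (0:ℝ) < (Nat.factorial (p + 1) : ℝ) := by positivity
    have h1 : (M i / (Nat.factorial (p + 1) : ℝ)) * r i ^ (p + 1) ≤
        F x + h x - taylorPoly p F x (y i) - ((inner ℝ a (y i) : ℝ) + b) := by
      have := hy i
      have := haff (y i)
      simp only [hr] at *
      linarith
    have hinner : -(inner ℝ a (y i) : ℝ) ≤ ‖a‖ * ‖x‖ + ‖a‖ * r i := by
      have h2 : |(inner ℝ a (y i) : ℝ)| ≤ ‖a‖ * ‖y i‖ := abs_real_inner_le_norm a (y i)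
      have h3 : ‖y i‖ ≤ ‖x‖ + r i := by
        have := norm_add_le x (y i - x)
        simpa [hr] using this
      have := abs_le.mp h2
      nlinarith [norm_nonneg a]
    have hrle : r i ≤ 1 + r i ^ p := by
      simpa using pow_le_one_add_pow (hrnn i) hp
    have honele : (1:ℝ) ≤ 1 + r i ^ p := by
      have := pow_nonneg (hrnn i) p; linarith
    have hTi := hT i
    have habs := abs_le.mp hTi
    have hconst : F x + h x - b ≤ |F x + h x - b| * (1 + r i ^ p) := by
      nlinarith [le_abs_self (F x + h x - b), abs_nonneg (F x + h x - b)]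
    have h4 : (M i / (Nat.factorial (p + 1) : ℝ)) * r i ^ (p + 1) ≤ C * (1 + r i ^ p) := by
      have hna : ‖a‖ * r i ≤ ‖a‖ * (1 + r i ^ p) :=
        mul_le_mul_of_nonneg_left hrle (norm_nonneg a)
      have hnx : ‖a‖ * ‖x‖ ≤ (‖a‖ * ‖x‖) * (1 + r i ^ p) := by
        nlinarith [mul_nonneg (mul_nonneg (norm_nonneg a) (norm_nonneg x)) (pow_nonneg (hrnn i) p)]
      have : -(taylorPoly p F x (y i)) ≤ C1 * (1 + r i ^ p) := by linarith [habs.1]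
      simp only [hC]
      linarith
    have := mul_le_mul_of_nonneg_left h4 hfac.le
    calc M i * r i ^ (p + 1)
        = (Nat.factorial (p + 1) : ℝ) *
            ((M i / (Nat.factorial (p + 1) : ℝ)) * r i ^ (p + 1)) := by
          field_simp
      _ ≤ (Nat.factorial (p + 1) : ℝ) * (C * (1 + r i ^ p)) := this
      _ ≤ K * (1 + r i ^ p) := by
          have : (0:ℝ) ≤ 1 + r i ^ p := by positivity
          nlinarith
  -- conclude convergence
  rw [Metric.tendsto_atTop]
  intro ε hε
  set δ : ℝ := min ε 1 with hδ
  have hδpos : 0 < δ := lt_min hε one_pos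
  have hδ1 : δ ≤ 1 := min_le_right _ _
  obtain ⟨N, hN⟩ := Filter.eventually_atTop.mp
      ((Filter.tendsto_atTop.mp hMtop) (max (2 * K + 1) (2 * K / δ ^ (p + 1) + 1)))
  refine ⟨N, fun n hn => ?_⟩
  have hMn := hN n hn
  have hMn1 : 2 * K + 1 ≤ M n := le_trans (le_max_left _ _) hMn
  have hMn2 : 2 * K / δ ^ (p + 1) + 1 ≤ M n := le_trans (le_max_right _ _) hMn
  have hrn : r n < δ := by
    by_contra hcon
    push_neg at hcon
    have hkey := key n
    rcases le_or_gt (r n) 1 with hle | hgt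
    · have hpp : r n ^ p ≤ 1 := pow_le_one₀ (hrnn n) hle
      have h2K : M n * r n ^ (p + 1) ≤ 2 * K := by
        have : K * (1 + r n ^ p) ≤ K * 2 :=
          mul_le_mul_of_nonneg_left (by linarith) hKpos.le
        linarith
      have hδle : δ ^ (p + 1) ≤ r n ^ (p + 1) :=
        pow_le_pow_left₀ hδpos.le hcon _
      have hδp : (0:ℝ) < δ ^ (p + 1) := by positivity
      have h6 : M n * δ ^ (p + 1) ≤ M n * r n ^ (p + 1) :=
        mul_le_mul_of_nonneg_left hδle (hMpos n).le
      have h7 : M n ≤ 2 * K / δ ^ (p + 1) := by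
        rw [le_div_iff₀ hδp]; linarith
      linarith
    · have h1p : (1:ℝ) ≤ r n ^ p := one_le_pow₀ hgt.le
      have hrp : (0:ℝ) < r n ^ p := by positivity
      have h2 : M n * r n ^ (p + 1) ≤ 2 * K * r n ^ p := by
        have : K * (1 + r n ^ p) ≤ K * (2 * r n ^ p) :=
          mul_le_mul_of_nonneg_left (by linarith) hKpos.le
        linarith
      have h4 : M n * r n ≤ 2 * K := by
        by_contra h5
        push_neg at h5
        have h6 : 2 * K * r n ^ p < (M n * r n) * r n ^ p :=
          mul_lt_mul_of_pos_right h5 hrp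
        have h7 : (M n * r n) * r n ^ p = M n * r n ^ (p + 1) := by ring
        linarith
      have h8 : M n * 1 ≤ M n * r n :=
        mul_le_mul_of_nonneg_left hgt.le (hMpos n).le
      linarith
  have : dist (r n) 0 = r n := by
    simp [Real.dist_eq, abs_of_nonneg (hrnn n)]
  rw [this]
  exact lt_of_lt_of_le hrn (min_le_left _ _)
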